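/- In B_4, if β, β', β'', β''' are strongly quasipositive braids (possibly trivial), then the braid σ_{1,2}^{−1} β σ_{1,3} β' σ_{2,4} β'' σ_{3,4} β''' is quasipositive. -/

import Mathlib

/-- Relations for the braid group `Bₙ`: the generator `k : Fin (n-1)` represents `σ_{k+1}`,
and we impose `σ_i σ_j = σ_j σ_i` for `|i - j| > 1` and `σ_i σ_{i+1} σ_i = σ_{i+1} σ_i σ_{i+1}`. -/
def braidRels (n : ℕ) : Set (FreeGroup (Fin (n - 1))) :=
  {r | ∃ i j : Fin (n - 1), (i : ℕ) + 1 < (j : ℕ) ∧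
      r = FreeGroup.of i * FreeGroup.of j * (FreeGroup.of i)⁻¹ * (FreeGroup.of j)⁻¹} ∪
  {r | ∃ i j : Fin (n - 1), (j : ℕ) = (i : ℕ) + 1 ∧
      r = FreeGroup.of i * FreeGroup.of j * FreeGroup.of i *
          (FreeGroup.of j * FreeGroup.of i * FreeGroup.of j)⁻¹}

/-- The braid group on `n` strands, presented with generators `σ_1, …, σ_{n-1}`. -/
abbrev BraidGroup (n : ℕ) : Type := PresentedGroup (braidRels n)

/-- The standard generator `σ_i` of `Bₙ`, for `1 ≤ i ≤ n - 1` (junk value `1` otherwise). -/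
def sigma (n i : ℕ) : BraidGroup n :=
  if h : 1 ≤ i ∧ i ≤ n - 1 then PresentedGroup.of ⟨i - 1, by omega⟩ else 1

/-- The word `σ_{j-1} σ_{j-2} ⋯ σ_{i+1}`. -/
def bandConj (n i j : ℕ) : BraidGroup n :=
  ((List.range (j - 1 - i)).map fun t => sigma n (j - 1 - t)).prod

/-- The band generator `σ_{i,j} = (σ_{j-1} σ_{j-2} ⋯ σ_{i+1}) σ_i (σ_{j-1} σ_{j-2} ⋯ σ_{i+1})⁻¹`.
In particular `σ_{i,i+1} = σ_i`. -/
def band (n i j : ℕ) : BraidGroup n :=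
  bandConj n i j * sigma n i * (bandConj n i j)⁻¹

/-- The set of band generators `σ_{i,j}`, `1 ≤ i < j ≤ n`, of `Bₙ`. -/
def bandGens (n : ℕ) : Set (BraidGroup n) :=
  {x | ∃ i j : ℕ, 1 ≤ i ∧ i < j ∧ j ≤ n ∧ x = band n i j}

/-- A braid is strongly quasipositive if it is a product of band generators, i.e. lies in the
submonoid generated by the `σ_{i,j}`, `1 ≤ i < j ≤ n`. -/
def StronglyQuasipositive (n : ℕ) (x : BraidGroup n) : Prop :=
  x ∈ Submonoid.closure (bandGens n)

/-- A braid is quasipositive if it lies in the submonoid generated by all conjugates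
`α σ_k α⁻¹` of the standard generators. -/
def Quasipositive (n : ℕ) (x : BraidGroup n) : Prop :=
  x ∈ Submonoid.closure
    {x : BraidGroup n | ∃ (α : BraidGroup n) (k : ℕ), 1 ≤ k ∧ k ≤ n - 1 ∧ x = α * sigma n k * α⁻¹}


lemma band_val (n i j : ℕ) : band n i j = bandConj n i j * sigma n i * (bandConj n i j)⁻¹ := rfl

lemma bandConj_12 : bandConj 4 1 2 = 1 := by simp [bandConj]
lemma bandConj_13 : bandConj 4 1 3 = sigma 4 2 := by
  simp [bandConj, List.range_succ]
lemma bandConj_24 : bandConj 4 2 4 = sigma 4 3 := by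
  simp [bandConj, List.range_succ]
lemma bandConj_34 : bandConj 4 3 4 = 1 := by simp [bandConj]

lemma band_12 : band 4 1 2 = sigma 4 1 := by simp [band_val, bandConj_12]
lemma band_13 : band 4 1 3 = sigma 4 2 * sigma 4 1 * (sigma 4 2)⁻¹ := by
  rw [band_val, bandConj_13]
lemma band_24 : band 4 2 4 = sigma 4 3 * sigma 4 2 * (sigma 4 3)⁻¹ := by
  rw [band_val, bandConj_24]
lemma band_34 : band 4 3 4 = sigma 4 3 := by simp [band_val, bandConj_34]

lemma qp_conj_gen (g : BraidGroup 4) (k : ℕ) (h1 : 1 ≤ k) (h2 : k ≤ 3) :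
    Quasipositive 4 (g * sigma 4 k * g⁻¹) :=
  Submonoid.subset_closure ⟨g, k, h1, h2, rfl⟩

lemma qp_conj_sqp (g x : BraidGroup 4) (hx : StronglyQuasipositive 4 x) :
    Quasipositive 4 (g * x * g⁻¹) := by
  refine Submonoid.closure_induction ?_ ?_ ?_ hx
  · rintro y ⟨i, j, hi, hij, hj, rfl⟩
    rw [band_val]
    have : g * (bandConj 4 i j * sigma 4 i * (bandConj 4 i j)⁻¹) * g⁻¹
        = (g * bandConj 4 i j) * sigma 4 i * (g * bandConj 4 i j)⁻¹ := by group
    rw [this]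
    exact qp_conj_gen _ i hi (by omega)
  · simpa [Quasipositive] using Submonoid.one_mem _
  · intro a b _ _ ha hb
    have : g * (a * b) * g⁻¹ = (g * a * g⁻¹) * (g * b * g⁻¹) := by group
    rw [this]
    exact Submonoid.mul_mem _ ha hb

/-- In `B₄`, for strongly quasipositive `β, β', β'', β'''`, the braid
`σ_{1,2}⁻¹ β σ_{1,3} β' σ_{2,4} β'' σ_{3,4} β'''` is quasipositive. -/
theorem claim_R_case2 (β β' β'' β''' : BraidGroup 4)
    (hβ : StronglyQuasipositive 4 β) (hβ' : StronglyQuasipositive 4 β')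
    (hβ'' : StronglyQuasipositive 4 β'') (hβ''' : StronglyQuasipositive 4 β''') :
    Quasipositive 4
      ((band 4 1 2)⁻¹ * β * band 4 1 3 * β' * band 4 2 4 * β'' * band 4 3 4 * β''') := by
  rw [band_12, band_13, band_24, band_34]
  have key : (sigma 4 1)⁻¹ * β * (sigma 4 2 * sigma 4 1 * (sigma 4 2)⁻¹) * β' *
      (sigma 4 3 * sigma 4 2 * (sigma 4 3)⁻¹) * β'' * sigma 4 3 * β''' =
      ((sigma 4 1)⁻¹ * β * (sigma 4 1)⁻¹⁻¹) * ((sigma 4 1)⁻¹ * sigma 4 2 * (sigma 4 1)⁻¹⁻¹) *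
      ((sigma 4 2)⁻¹ * β' * (sigma 4 2)⁻¹⁻¹) * ((sigma 4 2)⁻¹ * sigma 4 3 * (sigma 4 2)⁻¹⁻¹) *
      ((sigma 4 3)⁻¹ * β'' * (sigma 4 3)⁻¹⁻¹) * β''' := by group
  rw [key]
  refine Submonoid.mul_mem _ (Submonoid.mul_mem _ (Submonoid.mul_mem _ (Submonoid.mul_mem _
    (Submonoid.mul_mem _ ?_ ?_) ?_) ?_) ?_) ?_
  · exact qp_conj_sqp _ _ hβ
  · exact qp_conj_gen _ 2 (by norm_num) (by norm_num)
  · exact qp_conj_sqp _ _ hβ'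
  · exact qp_conj_gen _ 3 (by norm_num) (by norm_num)
  · exact qp_conj_sqp _ _ hβ''
  · simpa [Quasipositive] using qp_conj_sqp 1 _ hβ'''
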